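/- Let n ≥ 2 and let σ_1², ..., σ_n² be positive reals with largest element C and second-largest element c. Then M_1 := sup over nonzero x ∈ ℝⁿ with Σ x_i = 0 of (Σ_i σ_i² x_i²)/(Σ_i x_i²) satisfies M_1 ≤ ((n−1)/n)·C + (1/n)·c. -/

import Mathlib

/-- If `C` is the largest and `c` the second-largest (with multiplicity) of the
positive reals `σsq 1, ..., σsq n`, then the constrained Rayleigh quotient on
the hyperplane `{Σ xᵢ = 0}` is at most `((n-1)/n)·C + c/n`. -/
theorem rayleigh_quotient_le_M2 (n : ℕ) (hn : 2 ≤ n) (σsq : Fin n → ℝ)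
    (hpos : ∀ i, 0 < σsq i) (C c : ℝ)
    (i₀ : Fin n) (hi₀ : σsq i₀ = C)
    (hCmax : ∀ i, σsq i ≤ C)
    (hc2 : ∀ i, i ≠ i₀ → σsq i ≤ c)
    (hc_att : ∃ i, i ≠ i₀ ∧ σsq i = c) :
    ∀ x : Fin n → ℝ, x ≠ 0 → (∑ i, x i) = 0 →
      (∑ i, σsq i * (x i) ^ 2) ≤
        (((n : ℝ) - 1) / n * C + c / n) * ∑ i, (x i) ^ 2 := by
  intro x _ hsum
  obtain ⟨j, hj, hjc⟩ := hc_att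
  have hcC : c ≤ C := hjc ▸ hCmax j
  have hnpos : (0:ℝ) < n := by positivity
  set s := Finset.univ.erase i₀ with hs
  have hmem : i₀ ∈ (Finset.univ : Finset (Fin n)) := Finset.mem_univ _
  have hsplit : ∀ f : Fin n → ℝ, (∑ i, f i) = f i₀ + ∑ i ∈ s, f i := by
    intro f
    rw [hs, Finset.add_sum_erase _ _ hmem]
  -- Cauchy–Schwarz: x i₀ = - ∑ over s
  have hx0 : x i₀ = - ∑ i ∈ s, x i := by
    have := hsplit x
    rw [hsum] at this
    linarith
  have hcard : (s.card : ℝ) = (n : ℝ) - 1 := by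
    rw [hs, Finset.card_erase_of_mem hmem, Finset.card_univ, Fintype.card_fin]
    have : 1 ≤ n := by omega
    push_cast [Nat.cast_sub this]
    ring_nf
  have hCS : (x i₀) ^ 2 ≤ ((n:ℝ) - 1) * ∑ i ∈ s, (x i) ^ 2 := by
    have h := sq_sum_le_card_mul_sum_sq (s := s) (f := x)
    rw [hx0, neg_pow, ← hcard]
    simpa using h
  have hT : (0:ℝ) ≤ ∑ i ∈ s, (x i) ^ 2 := Finset.sum_nonneg fun i _ => sq_nonneg _
  -- bound the weighted sum
  have hb : (∑ i, σsq i * (x i) ^ 2) ≤ C * (x i₀)^2 + c * ∑ i ∈ s, (x i)^2 := by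
    rw [hsplit (fun i => σsq i * (x i)^2), hi₀, Finset.mul_sum]
    gcongr with i hi
    exact hc2 i (Finset.ne_of_mem_erase hi)
  have hS : (∑ i, (x i) ^ 2) = (x i₀)^2 + ∑ i ∈ s, (x i)^2 := hsplit _
  rw [hS]
  have key : (n:ℝ) * (C * (x i₀)^2 + c * ∑ i ∈ s, (x i)^2)
      ≤ (((n:ℝ)-1) * C + c) * ((x i₀)^2 + ∑ i ∈ s, (x i)^2) := by
    have h1 : (C - c) * ((n:ℝ) * (x i₀)^2) ≤ (C - c) * (((n:ℝ)-1) * ((x i₀)^2 + ∑ i ∈ s, (x i)^2)) := by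
      apply mul_le_mul_of_nonneg_left _ (by linarith)
      nlinarith [sq_nonneg (x i₀)]
    nlinarith
  have := hb.trans (by
    rw [div_mul_eq_mul_div, ← add_div, div_mul_eq_mul_div, le_div_iff₀ hnpos]
    linarith [key] :
    C * (x i₀)^2 + c * ∑ i ∈ s, (x i)^2 ≤ (((n:ℝ)-1)/n * C + c/n) * ((x i₀)^2 + ∑ i ∈ s, (x i)^2))
  exact this
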